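/- Let C>0, R>0 be fixed. Define g(c,r) = (c/r)^c ((C-c)/(R-r))^{C-c} for 0<c<C, 0<r<R. If c/r > C/R—that is, the rate inside exceeds the overall rate—then for fixed r, g(c,r) is nondecreasing in c; consequently g(c,r) ≥ (C/R)^C whenever c/r > (C-c)/(R-r). -/

import Mathlib

private noncomputable def scanH (C R r c : ℝ) : ℝ :=
  c * Real.log c - c * Real.log r +
    ((C - c) * Real.log (C - c) - (C - c) * Real.log (R - r))

private lemma scanH_continuous (C R r : ℝ) : Continuous (scanH C R r) := by
  have h1 : Continuous fun c : ℝ => c * Real.log c := Real.continuous_mul_log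
  have h3 : Continuous fun c : ℝ => (C - c) * Real.log (C - c) :=
    h1.comp (continuous_const.sub continuous_id)
  exact (h1.sub (continuous_id.mul continuous_const)).add
    (h3.sub ((continuous_const.sub continuous_id).mul continuous_const))

private lemma scanH_mono (C R : ℝ) (hC : 0 < C) (hR : 0 < R) (r : ℝ)
    (hr : 0 < r) (hrR : r < R) :
    StrictMonoOn (scanH C R r) (Set.Icc (r * C / R) C) := by
  have hRr : 0 < R - r := by linarith
  apply strictMonoOn_of_deriv_pos (convex_Icc _ _) (scanH_continuous C R r).continuousOn
  intro x hx
  rw [interior_Icc] at hx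
  have hx0 : 0 < x := lt_trans (by positivity) hx.1
  have hCx : 0 < C - x := by linarith [hx.2]
  have d1 : HasDerivAt (fun c : ℝ => c * Real.log c) (Real.log x + 1) x :=
    Real.hasDerivAt_mul_log hx0.ne'
  have d2 : HasDerivAt (fun c : ℝ => c * Real.log r) (Real.log r) x := by
    simpa using (hasDerivAt_id x).mul_const (Real.log r)
  have d3 : HasDerivAt (fun c : ℝ => (C - c) * Real.log (C - c))
      ((Real.log (C - x) + 1) * (-1)) x :=
    (Real.hasDerivAt_mul_log hCx.ne').comp x ((hasDerivAt_id x).const_sub C)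
  have d4 : HasDerivAt (fun c : ℝ => (C - c) * Real.log (R - r))
      (-Real.log (R - r)) x := by
    simpa using ((hasDerivAt_const x C).sub (hasDerivAt_id x)).mul_const (Real.log (R - r))
  have hd : HasDerivAt (scanH C R r)
      ((Real.log x + 1 - Real.log r) + ((Real.log (C - x) + 1) * (-1) - -Real.log (R - r))) x :=
    (d1.sub d2).add (d3.sub d4)
  rw [hd.deriv]
  have hcr : r * C < x * R := by
    have := hx.1
    rw [div_lt_iff₀ hR] at this
    linarith
  have key : (C - x) / (R - r) < x / r := by
    rw [div_lt_div_iff₀ hRr hr]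
    nlinarith
  have hlog := Real.log_lt_log (by positivity) key
  rw [Real.log_div hCx.ne' hRr.ne', Real.log_div hx0.ne' hr.ne'] at hlog
  linarith

private lemma scan_g_eq (C R r : ℝ) (hRr : 0 < R - r) (hr : 0 < r) (c : ℝ)
    (hc : 0 < c) (hcC : 0 < C - c) :
    (c / r) ^ c * ((C - c) / (R - r)) ^ (C - c) = Real.exp (scanH C R r c) := by
  rw [Real.rpow_def_of_pos (by positivity), Real.rpow_def_of_pos (by positivity),
    ← Real.exp_add, Real.log_div hc.ne' hr.ne', Real.log_div hcC.ne' hRr.ne', scanH]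
  congr 1
  ring

/-- The scan likelihood factor g(c, r) = (c/r)^c ((C-c)/(R-r))^{C-c}, 0<c<C, 0<r<R.
    For fixed r, g is nondecreasing in c on the set where c/r > C/R, and
    g(c, r) ≥ (C/R)^C whenever c/r > (C-c)/(R-r). -/
theorem scan_factor_monotone_and_ge (C R : ℝ) (hC : 0 < C) (hR : 0 < R) :
    (∀ r : ℝ, 0 < r → r < R →
      MonotoneOn (fun c : ℝ => (c / r) ^ c * ((C - c) / (R - r)) ^ (C - c))
        {c : ℝ | 0 < c ∧ c < C ∧ C / R < c / r})
    ∧ ∀ c r : ℝ, 0 < c → c < C → 0 < r → r < R →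
        (C - c) / (R - r) < c / r →
        (C / R) ^ C ≤ (c / r) ^ c * ((C - c) / (R - r)) ^ (C - c) := by
  constructor
  · intro r hr hrR
    have hRr : 0 < R - r := by linarith
    have mem : ∀ x : ℝ, x ∈ {c : ℝ | 0 < c ∧ c < C ∧ C / R < c / r} →
        x ∈ Set.Icc (r * C / R) C := by
      intro x hx
      obtain ⟨hx0, hxC, hxr⟩ := hx
      refine ⟨?_, hxC.le⟩
      rw [div_le_iff₀ hR]
      rw [div_lt_div_iff₀ hR hr] at hxr
      nlinarith
    intro x hx y hy hxy
    have hxI := mem x hx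
    have hyI := mem y hy
    dsimp only
    rw [scan_g_eq C R r hRr hr x hx.1 (by linarith [hx.2.1]),
      scan_g_eq C R r hRr hr y hy.1 (by linarith [hy.2.1])]
    exact Real.exp_le_exp.2 ((scanH_mono C R hC hR r hr hrR).monotoneOn hxI hyI hxy)
  · intro c r hc hcC hr hrR hlt
    have hRr : 0 < R - r := by linarith
    set c₀ := r * C / R with hc₀
    have hc₀pos : 0 < c₀ := by positivity
    have hCc₀ : 0 < C - c₀ := by
      have : C - c₀ = C * (R - r) / R := by rw [hc₀]; field_simp
      rw [this]; positivity
    have hc₀c : c₀ ≤ c := by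
      rw [div_lt_div_iff₀ hRr hr] at hlt
      rw [hc₀, div_le_iff₀ hR]
      nlinarith
    have hcc : 0 < C - c := by linarith
    have e1 : c₀ / r = C / R := by rw [hc₀]; field_simp
    have e2 : (C - c₀) / (R - r) = C / R := by
      rw [hc₀]; rw [div_eq_div_iff (by linarith) hR.ne']; field_simp
    have h0 := scan_g_eq C R r hRr hr c₀ hc₀pos hCc₀
    rw [e1, e2, ← Real.rpow_add (by positivity), add_sub_cancel] at h0
    rw [h0, scan_g_eq C R r hRr hr c hc hcc]
    exact Real.exp_le_exp.2 ((scanH_mono C R hC hR r hr hrR).monotoneOn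
      ⟨le_refl c₀, by linarith⟩ ⟨hc₀c, hcC.le⟩ hc₀c)
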